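/- Let A = ⟨A; *⟩ be a magma and suppose ⟨I, {B_i⁻}_{i∈I}, {φ_{ij}}⟩ is a system of isolated algebras with respect to A, i.e., {B_i}_{i∈I} is a frame of isolated subsets of A, B_i⁻ = B_i \ ⋃_{j<i} B_j, and {φ_{ij}} is a sound family of Płonka homomorphisms φ_{ij} : B_i⁻ → B_j⁻ for i ≤ j (with φ_{ii} = id and φ_{jk} ∘ φ_{ij} = φ_{ik} for i ≤ j ≤ k). Then for all a ∈ B_i⁻ and b ∈ B_j⁻, a * b = φ_{i, i∨j}(a) * φ_{j, i∨j}(b), and a * b ∈ B_{i∨j}⁻; that is, A coincides with the Płonka sum of this direct system. -/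
import Mathlib


def Isolated {A : Type*} (op : A → A → A) (B : Set A) : Prop :=
  (∀ a b : A, a ∈ B → b ∈ B → op a b ∈ B) ∧
  (∀ a b : A, (a ∉ B ∨ b ∉ B) → op a b ∉ B)

def Bminus {I α : Type*} [Preorder I] (B : I → Set α) (i : I) : Set α :=
  B i \ ⋃ j, ⋃ (_ : j < i), B j

def PHom {I α : Type*} [Preorder I] (op : α → α → α) (B : I → Set α)
    (i j : I) (φ : α → α) : Prop :=
  (∀ x ∈ Bminus B i, φ x ∈ Bminus B j) ∧
  (∀ x : α, x ∉ Bminus B i → φ x = x) ∧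
  (∀ x ∈ Bminus B i, ∀ y ∈ Bminus B i, φ (op x y) = op (φ x) (φ y)) ∧
  (∀ a b : α, op a b ∈ (⋃ k, ⋃ (_ : j ≤ k), Bminus B k) →
    op a b = op (φ a) (φ b))


lemma memL {I α : Type*} [SemilatticeSup I]
    (B : I → Set α) (hord : ∀ i j : I, i ≤ j ↔ B i ⊆ B j)
    (hinter : ∀ i j : I, (B i ∩ B j).Nonempty → ∃ k : I, B k = B i ∩ B j)
    {i k : I} {a : α} (ha : a ∈ Bminus B i) (hk : a ∈ B k) : i ≤ k := by
  obtain ⟨hai, hnot⟩ := ha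
  obtain ⟨m, hm⟩ := hinter i k ⟨a, hai, hk⟩
  have hmi : m ≤ i := (hord m i).2 (hm ▸ Set.inter_subset_left)
  have ham : a ∈ B m := hm ▸ ⟨hai, hk⟩
  have hme : m = i := by
    by_contra h
    exact hnot (Set.mem_iUnion₂.2 ⟨m, lt_of_le_of_ne hmi h, ham⟩)
  exact (hord i k).2 (by rw [← hme, hm]; exact Set.inter_subset_right)

/-- Decomposition theorem: given a system of isolated algebras
with respect to a magma `A` (a frame of isolated subsets together with a sound
family of Płonka homomorphisms `φ_{ij} : B_i⁻ → B_j⁻`), the magma operation of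
`A` is recovered as the Płonka sum operation of this direct system:
for `a ∈ B_i⁻` and `b ∈ B_j⁻`, `a * b = φ_{i,i∨j}(a) * φ_{j,i∨j}(b)`
and `a * b ∈ B_{i∨j}⁻`. -/
theorem stmt_17 {I α : Type*} [SemilatticeSup I] [Finite I]
    (op : α → α → α) (B : I → Set α)
    (hiso : ∀ i, Isolated op (B i))
    (hord : ∀ i j : I, i ≤ j ↔ B i ⊆ B j)
    (htop : ∃ t : I, B t = Set.univ)
    (hinter : ∀ i j : I, (B i ∩ B j).Nonempty → ∃ k : I, B k = B i ∩ B j)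
    (φ : I → I → α → α)
    (hid : ∀ (i : I) (x : α), φ i i x = x)
    (hphom : ∀ i j : I, i ≤ j → PHom op B i j (φ i j))
    (hcomp : ∀ i j k : I, i ≤ j → j ≤ k → ∀ x ∈ Bminus B i,
      φ j k (φ i j x) = φ i k x)
    (hnontriv : ∃ i j : I, i ≠ j) :
    ∀ i j : I, ∀ a ∈ Bminus B i, ∀ b ∈ Bminus B j,
      op a b = op (φ i (i ⊔ j) a) (φ j (i ⊔ j) b) ∧
      op a b ∈ Bminus B (i ⊔ j) := by

  intro i j a ha b hb
  set s := i ⊔ j with hs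
  have haS : a ∈ B s := (hord i s).1 le_sup_left ha.1
  have hbS : b ∈ B s := (hord j s).1 le_sup_right hb.1
  have hmem : op a b ∈ Bminus B s := by
    refine ⟨(hiso s).1 a b haS hbS, ?_⟩
    intro hcon
    obtain ⟨k, hk, habk⟩ := Set.mem_iUnion₂.1 hcon
    have hak : a ∈ B k := by
      by_contra h
      exact (hiso k).2 a b (Or.inl h) habk
    have hbk : b ∈ B k := by
      by_contra h
      exact (hiso k).2 a b (Or.inr h) habk
    exact absurd (sup_le (memL B hord hinter ha hak) (memL B hord hinter hb hbk))
      (not_le_of_gt hk)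
  refine ⟨?_, hmem⟩
  by_cases hij : i = j
  · subst hij
    simp only [hs, sup_idem, hid]
  · have hU : op a b ∈ ⋃ k, ⋃ (_ : s ≤ k), Bminus B k :=
      Set.mem_iUnion₂.2 ⟨s, le_refl s, hmem⟩
    have hbni : b ∉ Bminus B i := fun h =>
      hij (le_antisymm (memL B hord hinter h hb.1) (memL B hord hinter hb h.1))
    have eq1 : op a b = op (φ i s a) (φ i s b) :=
      (hphom i s le_sup_left).2.2.2 a b hU
    rw [(hphom i s le_sup_left).2.1 b hbni] at eq1
    have hU' : op (φ i s a) b ∈ ⋃ k, ⋃ (_ : s ≤ k), Bminus B k := by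
      rw [← eq1]; exact hU
    have eq2 : op (φ i s a) b = op (φ j s (φ i s a)) (φ j s b) :=
      (hphom j s le_sup_right).2.2.2 (φ i s a) b hU'
    have hfix : φ j s (φ i s a) = φ i s a := by
      by_cases hsj : s = j
      · rw [hsj]; exact hid _ _
      · refine (hphom j s le_sup_right).2.1 _ (fun h => ?_)
        have hS : φ i s a ∈ Bminus B s := (hphom i s le_sup_left).1 a ha
        exact hsj (le_antisymm (memL B hord hinter hS h.1)
          (memL B hord hinter h hS.1))
    rw [hfix] at eq2
    rw [eq1, eq2]
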